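/- Let Q^{(1)}, …, Q^{(n)} be symmetric tropical Metzler matrices of size m, and let F : (ℝ ∪ {−∞})^n → (ℝ ∪ {−∞})^n be the Shapley operator of the associated stochastic mean payoff game, given by F(x)_k = min over pairs (i,j) with Q^{(k)}_{ij} tropically negative of ( −|Q^{(k)}_{ij}| + (1/2)( max over l with Q^{(l)}_{ii} tropically positive of (Q^{(l)}_{ii} + x_l) + max over l with Q^{(l)}_{jj} tropically positive of (Q^{(l)}_{jj} + x_l) ) ). Then for every λ ∈ ℝ, the set S_λ of x ∈ (ℝ ∪ {−∞})^n satisfying: (a) for all i ∈ [m], max over l with Q^{(l)}_{ii} positive of (Q^{(l)}_{ii}+x_l) ≥ λ + max over l with Q^{(l)}_{ii} negative of (|Q^{(l)}_{ii}|+x_l), and (b) for all i < j, max over k with Q^{(k)}_{ii} positive of (Q^{(k)}_{ii}+x_k) + max over k' with Q^{(k')}_{jj} positive of (Q^{(k')}_{jj}+x_{k'}) ≥ 2λ + 2·max_l (|Q^{(l)}_{ij}| + x_l), equals {x : λ + x ≤ F(x)}. -/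

import Mathlib

/-- A signed tropical number: `none` is `-∞`, `some (true, a)` is the tropically
positive number `a`, `some (false, a)` the tropically negative number `⊖a`. -/
abbrev STrop := Option (Bool × ℝ)

/-- Tropically positive part (as an element of `ℝ ∪ {-∞} ⊂ EReal`). -/
noncomputable def posPart : STrop → EReal
  | some (true, a) => (a : EReal)
  | _ => ⊥

/-- Tropically negative part (modulus of a tropically negative number). -/
noncomputable def negPart : STrop → EReal
  | some (false, a) => (a : EReal)
  | _ => ⊥

/-- Modulus of a signed tropical number. -/
noncomputable def absPart : STrop → EReal
  | some (_, a) => (a : EReal)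
  | none => ⊥

/-- Boolean test for tropical negativity. -/
def isNegB : STrop → Bool
  | some (false, _) => true
  | _ => false

/- Auxiliary lemmas -/

private lemma coe_add_le_coe_add_iff (r : ℝ) {a b : EReal} :
    (r : EReal) + a ≤ (r : EReal) + b ↔ a ≤ b := by
  constructor
  · intro h
    have h' := add_le_add_right h (((-r : ℝ) : EReal))
    rwa [← add_assoc, ← add_assoc, ← EReal.coe_add, neg_add_cancel, EReal.coe_zero,
      zero_add, zero_add] at h'
  · intro h
    exact add_le_add_right h _

private lemma le_neg_add_iff (r : ℝ) {a b : EReal} :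
    a ≤ ((-r : ℝ) : EReal) + b ↔ (r : EReal) + a ≤ b := by
  rw [← coe_add_le_coe_add_iff r (a := a)]
  congr! 1
  rw [← add_assoc, ← EReal.coe_add, add_neg_cancel, EReal.coe_zero, zero_add]

private lemma lam_iSup {ι : Sort*} (r : ℝ) (f : ι → EReal) (c : EReal) :
    (r : EReal) + (⨆ l, f l) ≤ c ↔ ∀ l, (r : EReal) + f l ≤ c := by
  constructor
  · intro h l
    exact le_trans (add_le_add_right (le_iSup f l) _) h
  · intro h
    rw [← le_neg_add_iff]
    exact iSup_le fun l => (le_neg_add_iff r).mpr (h l)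

private lemma half_iff (u d : EReal) :
    u + u ≤ d ↔ u ≤ (((2 : ℝ)⁻¹ : ℝ) : EReal) * d := by
  have h2 : (0 : ℝ) < 2⁻¹ := by norm_num
  induction d with
  | bot =>
    rw [EReal.coe_mul_bot_of_pos h2]
    induction u with
    | bot => simp
    | coe u => simp [← EReal.coe_add]
    | top => simp [EReal.top_add_top]
  | top =>
    rw [EReal.coe_mul_top_of_pos h2]
    simp
  | coe d =>
    induction u with
    | bot => simp
    | coe u =>
      rw [← EReal.coe_add, ← EReal.coe_mul, EReal.coe_le_coe_iff, EReal.coe_le_coe_iff]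
      constructor <;> intro h <;> linarith
    | top =>
      rw [EReal.top_add_top, ← EReal.coe_mul, top_le_iff, top_le_iff]
      constructor <;> intro h <;> exact absurd h (EReal.coe_ne_top _)

private lemma half_double (u : EReal) :
    (((2 : ℝ)⁻¹ : ℝ) : EReal) * (u + u) = u := by
  have h2 : (0 : ℝ) < 2⁻¹ := by norm_num
  induction u with
  | bot => rw [EReal.bot_add, EReal.coe_mul_bot_of_pos h2]
  | top => rw [EReal.top_add_top, EReal.coe_mul_top_of_pos h2]
  | coe u =>
    rw [← EReal.coe_add, ← EReal.coe_mul]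
    norm_cast
    ring

private lemma abs_eq_neg_of_pos_bot {s : STrop} (h : posPart s = ⊥) :
    absPart s = negPart s := by
  match s with
  | none => rfl
  | some (false, a) => rfl
  | some (true, a) => exact absurd h (EReal.coe_ne_bot a)

/-- For symmetric tropical Metzler matrices `Q^{(1)},…,Q^{(n)}`
(satisfying the nonemptiness assumptions), the set `S_λ` described by the
shifted order-1 and order-2 tropical minor inequalities coincides with
`{x : λ + x ≤ F(x)}` where `F` is the Shapley operator of the associated
stochastic mean payoff game. -/
theorem metzler_spectrahedron_eq_subharmonic (n m : ℕ)
    (Q : Fin n → Matrix (Fin m) (Fin m) STrop)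
    (hsymm : ∀ k, (Q k).IsSymm)
    (hMetzler : ∀ k, ∀ i j : Fin m, i ≠ j → posPart (Q k i j) = ⊥)
    (hmin : ∀ k : Fin n,
      (Finset.univ.filter fun p : Fin m × Fin m => isNegB (Q k p.1 p.2) = true).Nonempty)
    (hmax : ∀ i : Fin m, ∃ k, posPart (Q k i i) ≠ ⊥)
    (F : (Fin n → EReal) → (Fin n → EReal))
    (hF : ∀ (x : Fin n → EReal) (k : Fin n),
      F x k =
        (Finset.univ.filter fun p : Fin m × Fin m => isNegB (Q k p.1 p.2) = true).inf'
          (hmin k) (fun p =>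
            -absPart (Q k p.1 p.2) +
              (((2 : ℝ)⁻¹ : ℝ) : EReal) *
                ((⨆ l, posPart (Q l p.1 p.1) + x l) + (⨆ l, posPart (Q l p.2 p.2) + x l))))
    (lam : ℝ) (x : Fin n → EReal) :
    ((∀ i : Fin m,
        (lam : EReal) + (⨆ l, negPart (Q l i i) + x l) ≤ ⨆ l, posPart (Q l i i) + x l) ∧
      (∀ i j : Fin m, i < j →
        (lam : EReal) + (lam : EReal) + (⨆ l, absPart (Q l i j) + x l) +
            (⨆ l, absPart (Q l i j) + x l) ≤
          (⨆ l, posPart (Q l i i) + x l) + (⨆ l, posPart (Q l j j) + x l)))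
    ↔ ∀ k, (lam : EReal) + x k ≤ F x k := by
  classical
  set A : Fin m → EReal := fun i => ⨆ l, posPart (Q l i i) + x l with hA
  set B : Fin m → Fin m → EReal := fun i j => ⨆ l, negPart (Q l i j) + x l with hB
  -- Step 1: unfold the RHS
  have hRHS : (∀ k, (lam : EReal) + x k ≤ F x k) ↔
      ∀ i j : Fin m, (lam : EReal) + B i j ≤ (((2 : ℝ)⁻¹ : ℝ) : EReal) * (A i + A j) := by
    constructor
    · intro h i j
      rw [lam_iSup]
      intro k
      match hq : Q k i j with
      | none =>
        rw [show _root_.negPart (none : STrop) = (⊥ : EReal) from rfl, EReal.bot_add,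
          EReal.add_bot]
        exact bot_le
      | some (true, a) =>
        rw [show _root_.negPart (some (true, a) : STrop) = (⊥ : EReal) from rfl, EReal.bot_add,
          EReal.add_bot]
        exact bot_le
      | some (false, a) =>
        have hk := h k
        rw [hF, Finset.le_inf'_iff] at hk
        have hmem : (i, j) ∈
            Finset.univ.filter (fun p : Fin m × Fin m => isNegB (Q k p.1 p.2) = true) := by
          rw [Finset.mem_filter]; exact ⟨Finset.mem_univ _, by rw [hq]; rfl⟩
        have h2 := hk (i, j) hmem
        rw [hq, show _root_.absPart (some (false, a) : STrop) = ((a : ℝ) : EReal) from rfl,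
          ← EReal.coe_neg, le_neg_add_iff] at h2
        rw [show _root_.negPart (some (false, a) : STrop) = ((a : ℝ) : EReal) from rfl,
          add_left_comm]
        exact h2
    · intro h k
      rw [hF, Finset.le_inf'_iff]
      rintro ⟨i, j⟩ hp
      simp only [Finset.mem_filter, Finset.mem_univ, true_and] at hp
      match hq : Q k i j with
      | none => rw [hq] at hp; exact absurd hp (by simp [isNegB])
      | some (true, a) => rw [hq] at hp; exact absurd hp (by simp [isNegB])
      | some (false, a) =>
        have hk := (lam_iSup lam _ _).mp (h i j) k
        rw [show _root_.negPart (Q k i j) = ((a : ℝ) : EReal) from by rw [hq]; rfl,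
          add_left_comm] at hk
        rw [show _root_.absPart (some (false, a) : STrop) = ((a : ℝ) : EReal) from rfl,
          ← EReal.coe_neg, le_neg_add_iff]
        exact hk
  rw [hRHS]
  -- Step 2: the remaining equivalence
  constructor
  · rintro ⟨h1, h2⟩ i j
    rcases lt_trichotomy i j with hij | hij | hij
    · have hb := h2 i j hij
      have habs : (⨆ l, absPart (Q l i j) + x l) = B i j := by
        apply iSup_congr
        intro l
        rw [abs_eq_neg_of_pos_bot (hMetzler l i j hij.ne)]
      rw [habs] at hb
      rw [← half_iff]
      calc ((lam : EReal) + B i j) + ((lam : EReal) + B i j)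
          = (lam : EReal) + (lam : EReal) + B i j + B i j := by abel
        _ ≤ A i + A j := hb
    · subst hij
      rw [half_double]
      exact h1 i
    · have hb := h2 j i hij
      have habs : (⨆ l, absPart (Q l j i) + x l) = B i j := by
        apply iSup_congr
        intro l
        rw [abs_eq_neg_of_pos_bot (hMetzler l j i hij.ne), (hsymm l).apply i j]
      rw [habs] at hb
      rw [← half_iff, add_comm (A i) (A j)]
      calc ((lam : EReal) + B i j) + ((lam : EReal) + B i j)
          = (lam : EReal) + (lam : EReal) + B i j + B i j := by abel
        _ ≤ A j + A i := hb
  · intro h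
    constructor
    · intro i
      have := h i i
      rwa [half_double] at this
    · intro i j hij
      have hb := h i j
      rw [← half_iff] at hb
      have habs : (⨆ l, absPart (Q l i j) + x l) = B i j := by
        apply iSup_congr
        intro l
        rw [abs_eq_neg_of_pos_bot (hMetzler l i j hij.ne)]
      rw [habs]
      calc (lam : EReal) + (lam : EReal) + B i j + B i j
          = ((lam : EReal) + B i j) + ((lam : EReal) + B i j) := by abel
        _ ≤ A i + A j := hb
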